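/- arXiv:2310.02480 — 2 statements merged into one kernel-verified Lean document; each statement's English description precedes it below -/
import Mathlib

section
/- No set of d+2 points in ℝ^d can be shattered by closed Euclidean balls. Hence the VC-dimension of Euclidean balls in ℝ^d is at most d+1. -/
def Shatters {α : Type*} (H : Set (Set α)) (S : Finset α) : Prop :=
  ∀ A : Finset α, A ⊆ S → ∃ h ∈ H, (S : Set α) ∩ h = (A : Set α)

def EuclBalls (d : ℕ) : Set (Set (EuclideanSpace ℝ (Fin d))) :=
  {s | ∃ (c : EuclideanSpace ℝ (Fin d)) (r : ℝ), 0 ≤ r ∧ s = Metric.closedBall c r}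

open Finset Metric

lemma shatters_subset {α : Type*} {H : Set (Set α)} {S S' : Finset α}
    (hS : Shatters H S) (hsub : S' ⊆ S) : Shatters H S' := by
  intro A hA
  obtain ⟨h, hH, hh⟩ := hS A (hA.trans hsub)
  refine ⟨h, hH, ?_⟩
  ext x
  constructor
  · rintro ⟨hx1, hx2⟩
    have : x ∈ (S : Set α) ∩ h := ⟨hsub hx1, hx2⟩
    rwa [hh] at this
  · intro hx
    have hxA : x ∈ A := hx
    have : x ∈ (S : Set α) ∩ h := by rw [hh]; exact hx
    exact ⟨hA hxA, this.2⟩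

lemma no_shatter (d : ℕ) (S : Finset (EuclideanSpace ℝ (Fin d)))
    (hcard : S.card = d + 2) : ¬ Shatters (EuclBalls d) S := by
  classical
  intro hsh
  set f : S → EuclideanSpace ℝ (Fin d) := Subtype.val with hf
  have hnotind : ¬ AffineIndependent ℝ f := by
    intro hind
    have hle := hind.card_le_finrank_succ
    have h1 : Module.finrank ℝ (vectorSpan ℝ (Set.range f)) ≤ d := by
      have := Submodule.finrank_le (vectorSpan ℝ (Set.range f))
      simpa [finrank_euclideanSpace_fin] using this
    rw [Fintype.card_coe, hcard] at hle
    omega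
  obtain ⟨I, x, hx1, hx2⟩ := Convex.radon_partition hnotind
  set A : Finset (EuclideanSpace ℝ (Fin d)) :=
    S.filter (fun p => p ∈ Subtype.val '' (I : Set S)) with hA
  have hAS : A ⊆ S := filter_subset _ _
  have hA'S : S \ A ⊆ S := sdiff_subset
  obtain ⟨B₁, hB₁mem, hB₁⟩ := hsh A hAS
  obtain ⟨B₂, hB₂mem, hB₂⟩ := hsh (S \ A) hA'S
  obtain ⟨c₁, r₁, hr₁, rfl⟩ := hB₁mem
  obtain ⟨c₂, r₂, hr₂, rfl⟩ := hB₂mem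
  set g : EuclideanSpace ℝ (Fin d) → ℝ := fun p =>
    2 * inner ℝ (c₂ - c₁) p + (‖c₁‖ ^ 2 - r₁ ^ 2 - ‖c₂‖ ^ 2 + r₂ ^ 2) with hg
  have key : ∀ p ∈ S, (p ∈ A → g p < 0) ∧ (p ∉ A → 0 < g p) := by
    intro p hp
    have hmem1 : p ∈ A ↔ p ∈ closedBall c₁ r₁ := by
      constructor
      · intro h
        have : p ∈ (S : Set (EuclideanSpace ℝ (Fin d))) ∩ closedBall c₁ r₁ :=
          ⟨by exact_mod_cast hp, by
            have : p ∈ (S : Set (EuclideanSpace ℝ (Fin d))) ∩ closedBall c₁ r₁ := by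
              rw [hB₁]; exact_mod_cast h
            exact this.2⟩
        exact this.2
      · intro h
        have : p ∈ (S : Set (EuclideanSpace ℝ (Fin d))) ∩ closedBall c₁ r₁ :=
          ⟨by exact_mod_cast hp, h⟩
        rw [hB₁] at this; exact_mod_cast this
    have hmem2 : p ∈ S \ A ↔ p ∈ closedBall c₂ r₂ := by
      constructor
      · intro h
        have : p ∈ (S : Set (EuclideanSpace ℝ (Fin d))) ∩ closedBall c₂ r₂ := by
          rw [hB₂]; exact_mod_cast h
        exact this.2
      · intro h
        have : p ∈ (S : Set (EuclideanSpace ℝ (Fin d))) ∩ closedBall c₂ r₂ :=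
          ⟨by exact_mod_cast hp, h⟩
        rw [hB₂] at this; exact_mod_cast this
    have hexp1 : ‖p - c₁‖ ^ 2 = ‖p‖ ^ 2 - 2 * inner ℝ p c₁ + ‖c₁‖ ^ 2 :=
      norm_sub_sq_real p c₁
    have hexp2 : ‖p - c₂‖ ^ 2 = ‖p‖ ^ 2 - 2 * inner ℝ p c₂ + ‖c₂‖ ^ 2 :=
      norm_sub_sq_real p c₂
    have hginner : inner ℝ (c₂ - c₁) p = (inner ℝ p c₂ : ℝ) - inner ℝ p c₁ := by
      rw [inner_sub_left, real_inner_comm c₂ p, real_inner_comm c₁ p]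
    constructor
    · intro hpA
      have h1 : dist p c₁ ≤ r₁ := mem_closedBall.1 (hmem1.1 hpA)
      have h2 : ¬ dist p c₂ ≤ r₂ := by
        intro h
        have := hmem2.2 (mem_closedBall.2 h)
        exact (Finset.mem_sdiff.1 this).2 hpA
      push_neg at h2
      rw [dist_eq_norm] at h1 h2
      have h1' : ‖p - c₁‖ ^ 2 ≤ r₁ ^ 2 := by nlinarith [norm_nonneg (p - c₁)]
      have h2' : r₂ ^ 2 < ‖p - c₂‖ ^ 2 := by nlinarith [norm_nonneg (p - c₂)]
      rw [hg]; dsimp only; rw [hginner]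
      nlinarith
    · intro hpA
      have hpA' : p ∈ S \ A := Finset.mem_sdiff.2 ⟨hp, hpA⟩
      have h2 : dist p c₂ ≤ r₂ := mem_closedBall.1 (hmem2.1 hpA')
      have h1 : ¬ dist p c₁ ≤ r₁ := by
        intro h
        exact hpA (hmem1.2 (mem_closedBall.2 h))
      push_neg at h1
      rw [dist_eq_norm] at h1 h2
      have h2' : ‖p - c₂‖ ^ 2 ≤ r₂ ^ 2 := by nlinarith [norm_nonneg (p - c₂)]
      have h1' : r₁ ^ 2 < ‖p - c₁‖ ^ 2 := by nlinarith [norm_nonneg (p - c₁)]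
      rw [hg]; dsimp only; rw [hginner]
      nlinarith
  have hlin2 : IsLinearMap ℝ
      (fun p : EuclideanSpace ℝ (Fin d) => 2 * (inner ℝ (c₂ - c₁) p : ℝ)) :=
    ⟨fun u v => by rw [inner_add_right]; ring, fun c u => by rw [real_inner_smul_right, smul_eq_mul]; ring⟩
  have hconv1 : Convex ℝ {p : EuclideanSpace ℝ (Fin d) | g p < 0} := by
    have := convex_halfSpace_lt hlin2 (-(‖c₁‖ ^ 2 - r₁ ^ 2 - ‖c₂‖ ^ 2 + r₂ ^ 2))
    convert this using 1
    · rfl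
    ext p; simp only [hg, Set.mem_setOf_eq]; constructor <;> intro <;> linarith
  have hconv2 : Convex ℝ {p : EuclideanSpace ℝ (Fin d) | 0 < g p} := by
    have := convex_halfSpace_gt hlin2 (-(‖c₁‖ ^ 2 - r₁ ^ 2 - ‖c₂‖ ^ 2 + r₂ ^ 2))
    convert this using 1
    · rfl
    ext p; simp only [hg, Set.mem_setOf_eq]; constructor <;> intro <;> linarith
  have hsub1 : f '' I ⊆ {p : EuclideanSpace ℝ (Fin d) | g p < 0} := by
    rintro q ⟨v, hv, rfl⟩
    have hqS : (f v) ∈ S := v.2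
    have hqA : f v ∈ A := by
      rw [hA, Finset.mem_filter]
      exact ⟨v.2, ⟨v, hv, rfl⟩⟩
    exact ((key _ hqS).1 hqA)
  have hsub2 : f '' Iᶜ ⊆ {p : EuclideanSpace ℝ (Fin d) | 0 < g p} := by
    rintro q ⟨v, hv, rfl⟩
    have hqS : (f v) ∈ S := v.2
    have hqA : f v ∉ A := by
      rw [hA, Finset.mem_filter]
      rintro ⟨-, u, hu, huv⟩
      have : u = v := Subtype.val_injective huv
      exact hv (this ▸ hu)
    exact ((key _ hqS).2 hqA)
  have hx1' : g x < 0 := convexHull_min hsub1 hconv1 hx1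
  have hx2' : 0 < g x := convexHull_min hsub2 hconv2 hx2
  linarith

/-- No set of `d + 2` points in `ℝ^d` is shattered by closed Euclidean balls; hence the
VC-dimension of Euclidean balls in `ℝ^d` is at most `d + 1`. -/
theorem euclBalls_vcDim_le (d : ℕ) :
    (∀ S : Finset (EuclideanSpace ℝ (Fin d)), S.card = d + 2 → ¬ Shatters (EuclBalls d) S) ∧
    (∀ S : Finset (EuclideanSpace ℝ (Fin d)), Shatters (EuclBalls d) S → S.card ≤ d + 1) := by
  refine ⟨no_shatter d, ?_⟩
  intro S hS
  by_contra h
  push_neg at h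
  obtain ⟨S', hS'sub, hS'card⟩ :=
    Finset.exists_subset_card_eq (show d + 2 ≤ S.card by omega)
  exact no_shatter d S' hS'card (shatters_subset hS hS'sub)
end

section
/- Let H' be the class of closed Euclidean balls in ℝ^d and H = {B₁ ∪ B₂ : B₁, B₂ ∈ H'} the class of 2-fold unions of balls. Then the VC-dimension of H is at least 2d. -/
namespace VCAux

noncomputable section

def sgn (b : Bool) : ℝ := if b then 1 else -1

def pt (d : ℕ) (τ : Bool) (i : Fin d) : EuclideanSpace ℝ (Fin d) :=
  WithLp.toLp 2 (fun j => sgn τ * (d + 2) + (if j = i then 1 else 0))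

def ctr (d : ℕ) (σ : Bool) (A : Finset (Fin d)) : EuclideanSpace ℝ (Fin d) :=
  WithLp.toLp 2 (fun j => sgn σ * (d + 2) + (if j ∈ A then 1 else -1))

@[simp] lemma sgn_true : sgn true = 1 := rfl
@[simp] lemma sgn_false : sgn false = -1 := rfl

lemma pt_inj (d : ℕ) : Function.Injective (fun p : Bool × Fin d => pt d p.1 p.2) := by
  rintro ⟨τ, i⟩ ⟨τ', i'⟩ h
  simp only at h
  have h1 : pt d τ i i = pt d τ' i' i := by rw [h]
  have hd0 : (0:ℝ) ≤ d := Nat.cast_nonneg d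
  simp only [pt, PiLp.toLp_apply, if_pos rfl] at h1
  cases τ <;> cases τ' <;> simp only [sgn_true, sgn_false] at h1
  · by_cases hii : i = i'
    · exact congrArg _ hii
    · rw [if_neg hii] at h1; norm_num at h1
  · exfalso; split_ifs at h1 <;> linarith
  · exfalso; split_ifs at h1 <;> linarith
  · by_cases hii : i = i'
    · exact congrArg _ hii
    · rw [if_neg hii] at h1; norm_num at h1

lemma mem_ball_iff (d : ℕ) (τ σ : Bool) (i : Fin d) (A : Finset (Fin d)) :
    pt d τ i ∈ Metric.closedBall (ctr d σ A) (Real.sqrt (d + 1)) ↔ (τ = σ ∧ i ∈ A) := by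
  have hd1 : (1:ℝ) ≤ d := by exact_mod_cast i.pos
  rw [Metric.mem_closedBall, EuclideanSpace.dist_eq]
  have hdistsq : ∀ j : Fin d,
      dist (pt d τ i j) (ctr d σ A j) ^ 2 = (pt d τ i j - ctr d σ A j) ^ 2 := by
    intro j; rw [Real.dist_eq, sq_abs]
  by_cases hτσ : τ = σ
  · subst hτσ
    -- the sums of squares
    have hterm : ∀ j : Fin d, (pt d τ i j - ctr d τ A j) ^ 2 =
        ((if j = i then (1:ℝ) else 0) - (if j ∈ A then (1:ℝ) else -1)) ^ 2 := by
      intro j; simp only [pt, ctr, PiLp.toLp_apply]; ring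
    have hsum : ∑ j : Fin d, dist (pt d τ i j) (ctr d τ A j) ^ 2 =
        ((1:ℝ) - (if i ∈ A then (1:ℝ) else -1)) ^ 2 + ((d:ℝ) - 1) := by
      have h1 : ∑ j : Fin d, dist (pt d τ i j) (ctr d τ A j) ^ 2 =
          ∑ j : Fin d, ((if j = i then (1:ℝ) else 0) - (if j ∈ A then (1:ℝ) else -1)) ^ 2 := by
        refine Finset.sum_congr rfl fun j _ => ?_
        rw [hdistsq j, hterm j]
      rw [h1, ← Finset.add_sum_erase _ _ (Finset.mem_univ i), if_pos rfl]
      congr 1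
      have h2 : ∀ j ∈ Finset.univ.erase i,
          ((if j = i then (1:ℝ) else 0) - (if j ∈ A then (1:ℝ) else -1)) ^ 2 = 1 := by
        intro j hj
        rw [if_neg (Finset.mem_erase.mp hj).1]
        split_ifs <;> norm_num
      rw [Finset.sum_congr rfl h2, Finset.sum_const, Finset.card_erase_of_mem (Finset.mem_univ i),
        Finset.card_univ, Fintype.card_fin, nsmul_eq_mul, mul_one,
        Nat.cast_sub i.pos, Nat.cast_one]
    rw [hsum]
    by_cases hiA : i ∈ A
    · rw [if_pos hiA]
      constructor
      · intro _; exact ⟨rfl, hiA⟩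
      · intro _; exact Real.sqrt_le_sqrt (by nlinarith)
    · rw [if_neg hiA]
      simp only [hiA, and_false, iff_false, not_le]
      have hlt : (d:ℝ) + 1 < ((1:ℝ) - (-1)) ^ 2 + ((d:ℝ) - 1) := by nlinarith
      exact Real.sqrt_lt_sqrt (by positivity) hlt
  · -- different clusters: point is far from the center
    simp only [hτσ, false_and, iff_false, not_le]
    have hterm : ∀ j : Fin d, (2 * (d:ℝ) + 2) ^ 2 ≤ dist (pt d τ i j) (ctr d σ A j) ^ 2 := by
      intro j
      rw [hdistsq j]
      simp only [pt, ctr, PiLp.toLp_apply]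
      have hne : sgn τ - sgn σ = 2 ∨ sgn τ - sgn σ = -2 := by
        cases τ <;> cases σ <;>
          first
          | exact absurd rfl hτσ
          | (norm_num [sgn_true, sgn_false])
      rcases hne with h | h <;>
      · have : sgn τ * ((d:ℝ) + 2) + (if j = i then (1:ℝ) else 0) -
            (sgn σ * ((d:ℝ) + 2) + (if j ∈ A then (1:ℝ) else -1)) =
            (sgn τ - sgn σ) * ((d:ℝ) + 2) + (if j = i then (1:ℝ) else 0) -
            (if j ∈ A then (1:ℝ) else -1) := by ring
        rw [this, h]
        split_ifs <;> nlinarith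
    have hsum : (d:ℝ) * (2 * (d:ℝ) + 2) ^ 2 ≤
        ∑ j : Fin d, dist (pt d τ i j) (ctr d σ A j) ^ 2 := by
      calc (d:ℝ) * (2 * (d:ℝ) + 2) ^ 2 = ∑ _j : Fin d, (2 * (d:ℝ) + 2) ^ 2 := by
            rw [Finset.sum_const, Finset.card_univ, Fintype.card_fin, nsmul_eq_mul]
        _ ≤ _ := Finset.sum_le_sum fun j _ => hterm j
    have hlt : (d:ℝ) + 1 < ∑ j : Fin d, dist (pt d τ i j) (ctr d σ A j) ^ 2 := by nlinarith
    exact Real.sqrt_lt_sqrt (by positivity) hlt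

end

end VCAux

/-- The class of 2-fold unions of closed Euclidean balls in `ℝ^d` has VC-dimension at least
`2 * d`: it shatters some set of `2 * d` points. -/
theorem twoFoldUnions_balls_vcDim_ge (d : ℕ) :
    ∃ S : Finset (EuclideanSpace ℝ (Fin d)), S.card = 2 * d ∧
      Shatters {u | ∃ B₁ ∈ EuclBalls d, ∃ B₂ ∈ EuclBalls d, u = B₁ ∪ B₂} S := by
  classical
  refine ⟨Finset.image (fun p : Bool × Fin d => VCAux.pt d p.1 p.2) Finset.univ, ?_, ?_⟩
  · rw [Finset.card_image_of_injective _ (VCAux.pt_inj d), Finset.card_univ,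
      Fintype.card_prod, Fintype.card_bool, Fintype.card_fin]
  · intro A hA
    set S : Finset (EuclideanSpace ℝ (Fin d)) :=
      Finset.image (fun p : Bool × Fin d => VCAux.pt d p.1 p.2) Finset.univ with hS
    set r : ℝ := Real.sqrt (d + 1) with hr
    have hr0 : 0 ≤ r := Real.sqrt_nonneg _
    set A₁ : Finset (Fin d) := Finset.univ.filter (fun i => VCAux.pt d true i ∈ A) with hA₁
    set A₂ : Finset (Fin d) := Finset.univ.filter (fun i => VCAux.pt d false i ∈ A) with hA₂
    refine ⟨Metric.closedBall (VCAux.ctr d true A₁) r ∪ Metric.closedBall (VCAux.ctr d false A₂) r,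
      ⟨Metric.closedBall (VCAux.ctr d true A₁) r, ⟨_, r, hr0, rfl⟩,
        Metric.closedBall (VCAux.ctr d false A₂) r, ⟨_, r, hr0, rfl⟩, rfl⟩, ?_⟩
    ext x
    constructor
    · rintro ⟨hxS, hball⟩
      obtain ⟨⟨τ, i⟩, -, rfl⟩ := Finset.mem_image.mp (Finset.mem_coe.mp hxS)
      rcases hball with hb | hb
      · obtain ⟨hτ, hi⟩ := (VCAux.mem_ball_iff d τ true i A₁).mp hb
        subst hτ
        exact Finset.mem_coe.mpr (Finset.mem_filter.mp hi).2
      · obtain ⟨hτ, hi⟩ := (VCAux.mem_ball_iff d τ false i A₂).mp hb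
        subst hτ
        exact Finset.mem_coe.mpr (Finset.mem_filter.mp hi).2
    · intro hx
      have hxA : x ∈ A := Finset.mem_coe.mp hx
      have hxS : x ∈ S := hA hxA
      obtain ⟨⟨τ, i⟩, -, rfl⟩ := Finset.mem_image.mp hxS
      refine ⟨Finset.mem_coe.mpr hxS, ?_⟩
      cases τ
      · exact Or.inr ((VCAux.mem_ball_iff d false false i A₂).mpr
          ⟨rfl, Finset.mem_filter.mpr ⟨Finset.mem_univ i, hxA⟩⟩)
      · exact Or.inl ((VCAux.mem_ball_iff d true true i A₁).mpr
          ⟨rfl, Finset.mem_filter.mpr ⟨Finset.mem_univ i, hxA⟩⟩)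
end
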